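/- arXiv:1507.02935 — 4 statements merged into one kernel-verified Lean document; each statement's English description precedes it below -/
import Mathlib

section
/- For i.i.d. Bernoulli(p) trials X_1,...,X_n with 0<p<1, q=1-p, and L(n) the length of the longest run of 1's, for all integers 1 ≤ k ≤ n one has (1-p^k)^{n-k+1} ≤ P(L(n) < k) ≤ (1-q p^k)^{n-k+1}. -/
open MeasureTheory ProbabilityTheory Filter Set
open scoped ENNReal Classical

/-- The longest run of `true`s among the first `n` trials `X 0, ..., X (n-1)`. -/
noncomputable def longestRun (X : ℕ → Bool) (n : ℕ) : ℕ :=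
  (Finset.range (n + 1)).sup fun ℓ =>
    if ∃ i, i + ℓ ≤ n ∧ ∀ j < ℓ, X (i + j) = true then ℓ else 0

/-- There is a success run of length `k` within the first `n` trials. -/
def Arun (X : ℕ → Bool) (k n : ℕ) : Prop :=
  ∃ i, i + k ≤ n ∧ ∀ j < k, X (i + j) = true

lemma Arun.mono {X : ℕ → Bool} {k m n : ℕ} (h : m ≤ n) :
    Arun X k m → Arun X k n := by
  rintro ⟨i, hi, hj⟩; exact ⟨i, hi.trans h, hj⟩

lemma longestRun_lt_iff {X : ℕ → Bool} {n k : ℕ} (hk : 1 ≤ k) :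
    longestRun X n < k ↔ ¬ Arun X k n := by
  unfold longestRun
  rw [Finset.sup_lt_iff (by simpa [Nat.bot_eq_zero] using Nat.succ_le_iff.mp hk)]
  constructor
  · rintro h ⟨i, hik, hj⟩
    have hkmem : k ∈ Finset.range (n+1) := Finset.mem_range.2 (by omega)
    have := h k hkmem
    rw [if_pos ⟨i, hik, hj⟩] at this
    omega
  · intro h ℓ hℓ
    split_ifs with hcond
    · by_contra hlt
      push_neg at hlt
      obtain ⟨i, hik, hj⟩ := hcond
      exact h ⟨i, by omega, fun j hj' => hj j (by omega)⟩
    · omega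

lemma arun_pad {X : ℕ → Bool} {k m : ℕ}
    (hm : ¬ Arun X k m) (hx : X m = false) : ¬ Arun X k (m + k) := by
  rintro ⟨i, hik, hj⟩
  by_cases h2 : i + k ≤ m
  · exact hm ⟨i, h2, hj⟩
  · have him : i ≤ m := by omega
    have := hj (m - i) (by omega)
    rw [Nat.add_sub_cancel' him] at this
    simp [hx] at this

lemma arun_decomp {X : ℕ → Bool} {k : ℕ} (hk : 1 ≤ k) (m : ℕ) :
    (¬ Arun X k (m+k) ↔ ¬ Arun X k (m+k+1) ∨
      (¬ Arun X k m ∧ X m = false ∧ ∀ j < k, X (m+1+j) = true)) ∧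
    ¬ (¬ Arun X k (m+k+1) ∧
      (¬ Arun X k m ∧ X m = false ∧ ∀ j < k, X (m+1+j) = true)) := by
  constructor
  · constructor
    · intro h
      by_cases h1 : Arun X k (m+k+1)
      · right
        obtain ⟨i, hik, hj⟩ := h1
        have hi : i = m + 1 := by
          rcases Nat.lt_or_ge (i+k) (m+k+1) with h2 | h2
          · exact absurd ⟨i, by omega, hj⟩ h
          · omega
        subst hi
        refine ⟨fun ha => h (ha.mono (by omega)), ?_, fun j hj' => hj j hj'⟩
        by_contra hxm
        have hxm' : X m = true := by
          cases hX : X m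
          · exact absurd hX hxm
          · rfl
        apply h
        refine ⟨m, by omega, fun j hj' => ?_⟩
        rcases Nat.eq_zero_or_pos j with rfl | hjpos
        · simpa using hxm'
        · have h3 := hj (j-1) (by omega)
          have h4 : m + 1 + (j-1) = m + j := by omega
          rwa [h4] at h3
      · exact Or.inl h1
    · rintro (h | ⟨hm1, hfalse, hrun⟩)
      · exact fun ha => h (ha.mono (by omega))
      · exact arun_pad hm1 hfalse
  · rintro ⟨h1, hm1, hfalse, hrun⟩
    exact h1 ⟨m+1, by omega, fun j hj' => hrun j hj'⟩

lemma cyl_iff {Y : ℕ → Bool} {m k : ℕ} :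
    (Y m = false ∧ ∀ j < k, Y (m+1+j) = true) ↔
      (∀ i, m ≤ i → i ≤ m + k → Y i = decide (m < i)) := by
  constructor
  · rintro ⟨h0, h1⟩ i him hik
    rcases Nat.eq_or_lt_of_le him with rfl | hlt
    · simpa using h0
    · have h2 := h1 (i - (m+1)) (by omega)
      have e : m + 1 + (i - (m+1)) = i := by omega
      rw [e] at h2
      rw [h2]
      exact (decide_eq_true hlt).symm
  · intro h
    constructor
    · have := h m le_rfl (by omega); simpa using this
    · intro j hj
      have h5 := h (m+1+j) (by omega) (by omega)
      rw [h5]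
      exact decide_eq_true (by omega)

section meas
variable {Ω : Type*} [MeasurableSpace Ω] (μ : Measure Ω) [IsProbabilityMeasure μ]
  (X : ℕ → Ω → Bool) (p : ℝ) (hp0 : 0 < p) (hp1 : p < 1)
  (hmeas : ∀ i, Measurable (X i))
  (hindep : iIndepFun X μ)
  (hdist : ∀ i, μ {ω | X i ω = true} = ENNReal.ofReal p)

include hp0 hp1 hmeas hindep hdist

set_option linter.unusedSectionVars false

lemma measure_X_false (i : ℕ) : μ (X i ⁻¹' {false}) = ENNReal.ofReal (1 - p) := by
  have h1 : X i ⁻¹' {false} = (X i ⁻¹' {true})ᶜ := by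
    ext ω; simp [Set.mem_preimage]
  have h2 : μ (X i ⁻¹' {true}) = ENNReal.ofReal p := hdist i
  rw [h1, prob_compl_eq_one_sub (hmeas i (measurableSet_singleton true)), h2,
    ← ENNReal.ofReal_one, ← ENNReal.ofReal_sub _ hp0.le]

lemma measure_cyl (m t : ℕ) :
    μ (⋂ i ∈ Finset.Icc m (m + t), X i ⁻¹' {decide (m < i)})
      = ENNReal.ofReal (1 - p) * ENNReal.ofReal p ^ t := by
  have hprod := hindep.measure_inter_preimage_eq_mul (S := Finset.Icc m (m + t))
    (sets := fun i => {decide (m < i)}) (fun i _ => measurableSet_singleton _)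
  rw [hprod]
  have himg : Finset.Icc m (m + t) = (Finset.range (t + 1)).image (fun j => m + j) := by
    ext a
    simp only [Finset.mem_Icc, Finset.mem_image, Finset.mem_range]
    constructor
    · intro h; exact ⟨a - m, by omega, by omega⟩
    · rintro ⟨j, hj, rfl⟩; omega
  rw [himg, Finset.prod_image (by intro a _ b _ h; simp only at h; omega)]
  rw [Finset.prod_range_succ']
  have h0 : μ (X (m + 0) ⁻¹' {decide (m < m + 0)}) = ENNReal.ofReal (1 - p) := by
    have : decide (m < m + 0) = false := by simp
    rw [this]
    exact measure_X_false μ X p hp0 hp1 hmeas hindep hdist m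
  rw [h0]
  have h1 : ∀ x ∈ Finset.range t,
      μ (X (m + (x + 1)) ⁻¹' {decide (m < m + (x + 1))}) = ENNReal.ofReal p := by
    intro x _
    have : decide (m < m + (x + 1)) = true := by simp
    rw [this]
    exact hdist _
  rw [Finset.prod_congr rfl h1, Finset.prod_const, Finset.card_range, mul_comm]

lemma measure_E_inter_cyl (k m t : ℕ) :
    μ ({ω | ¬ Arun (fun i => X i ω) k m} ∩
        ⋂ i ∈ Finset.Icc m (m + t), X i ⁻¹' {decide (m < i)})
      = μ {ω | ¬ Arun (fun i => X i ω) k m} *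
        (ENNReal.ofReal (1 - p) * ENNReal.ofReal p ^ t) := by
  classical
  set S : Finset ℕ := Finset.range m with hS
  set T : Finset ℕ := Finset.Icc m (m + t) with hT
  have hST : Disjoint S T := by
    rw [Finset.disjoint_left]
    intro a haS haT
    simp only [hS, Finset.mem_range] at haS
    simp only [hT, Finset.mem_Icc] at haT
    omega
  have hIF := hindep.indepFun_finset S T hST hmeas
  set SB : Set (↥S → Bool) :=
    {g | ¬ ∃ i, i + k ≤ m ∧ ∀ j < k, ∀ h : i + j ∈ S, g ⟨i + j, h⟩ = true} with hSB
  set SC : Set (↥T → Bool) := {g | ∀ i, ∀ h : i ∈ T, g ⟨i, h⟩ = decide (m < i)} with hSC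
  have hB : {ω | ¬ Arun (fun i => X i ω) k m} = (fun ω (i : ↥S) => X i ω) ⁻¹' SB := by
    ext ω
    simp only [Set.mem_preimage, Set.mem_setOf_eq, hSB, Arun]
    constructor
    · rintro h ⟨i, hik, hj⟩
      exact h ⟨i, hik, fun j hj' => hj j hj' (Finset.mem_range.2 (by omega))⟩
    · rintro h ⟨i, hik, hj⟩
      exact h ⟨i, hik, fun j hj' _ => hj j hj'⟩
  have hC : (⋂ i ∈ T, X i ⁻¹' {decide (m < i)}) = (fun ω (i : ↥T) => X i ω) ⁻¹' SC := by
    ext ω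
    simp only [Set.mem_iInter, Set.mem_preimage, Set.mem_setOf_eq, hSC,
      Set.mem_singleton_iff]
  have hmSB : MeasurableSet SB := (Set.to_countable SB).measurableSet
  have hmSC : MeasurableSet SC := (Set.to_countable SC).measurableSet
  rw [hB, hC, hIF.measure_inter_preimage_eq_mul SB SC hmSB hmSC, ← hC]
  rw [measure_cyl μ X p hp0 hp1 hmeas hindep hdist m t]

end meas

theorem longestRun_cdf_bounds
    {Ω : Type*} [MeasurableSpace Ω] (μ : Measure Ω) [IsProbabilityMeasure μ]
    (X : ℕ → Ω → Bool) (p : ℝ) (hp0 : 0 < p) (hp1 : p < 1)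
    (hmeas : ∀ i, Measurable (X i))
    (hindep : iIndepFun X μ)
    (hdist : ∀ i, μ {ω | X i ω = true} = ENNReal.ofReal p)
    (n k : ℕ) (hk : 1 ≤ k) (hkn : k ≤ n) :
    (1 - p ^ k) ^ (n - k + 1) ≤
        (μ {ω | longestRun (fun i => X i ω) n < k}).toReal ∧
      (μ {ω | longestRun (fun i => X i ω) n < k}).toReal ≤
        (1 - (1 - p) * p ^ k) ^ (n - k + 1) := by
  classical
  set E : ℕ → Set Ω := fun m => {ω | ¬ Arun (fun i => X i ω) k m} with hE
  have hq0 : (0:ℝ) ≤ 1 - p := by linarith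
  have hXtrue : ∀ i, MeasurableSet (X i ⁻¹' {true}) :=
    fun i => hmeas i (measurableSet_singleton true)
  have hEmeas : ∀ m, MeasurableSet (E m) := by
    intro m
    have heq : E m = (⋃ (i : ℕ) (_ : i + k ≤ m), ⋂ j ∈ Finset.range k,
        X (i + j) ⁻¹' {true})ᶜ := by
      ext ω
      simp only [hE, Set.mem_setOf_eq, Set.mem_compl_iff, Set.mem_iUnion, Set.mem_iInter,
        Set.mem_preimage, Set.mem_singleton_iff, Arun, Finset.mem_range, exists_prop]
    rw [heq]
    exact (MeasurableSet.iUnion fun i => MeasurableSet.iUnion fun _ =>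
      MeasurableSet.biInter (Finset.range k).countable_toSet fun j _ => hXtrue _).compl
  have hmono : ∀ {a b : ℕ}, a ≤ b → E b ⊆ E a := by
    intro a b hab ω hω ha
    exact hω (ha.mono hab)
  -- cylinder measures
  have hcyl : ∀ m t, μ (E m ∩ ⋂ i ∈ Finset.Icc m (m + t), X i ⁻¹' {decide (m < i)})
      = μ (E m) * (ENNReal.ofReal (1 - p) * ENNReal.ofReal p ^ t) :=
    fun m t => measure_E_inter_cyl μ X p hp0 hp1 hmeas hindep hdist k m t
  have hcylmeas : ∀ m t, MeasurableSet
      (E m ∩ ⋂ i ∈ Finset.Icc m (m + t), X i ⁻¹' {decide (m < i)}) :=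
    fun m t => (hEmeas m).inter (MeasurableSet.biInter
      (Finset.Icc m (m + t)).countable_toSet fun i _ => hmeas i (measurableSet_singleton _))
  -- recursion
  have hrec : ∀ m, μ (E (m+k)) = μ (E (m+k+1)) +
      μ (E m) * (ENNReal.ofReal (1 - p) * ENNReal.ofReal p ^ k) := by
    intro m
    have hsplit : E (m+k) = E (m+k+1) ∪
        (E m ∩ ⋂ i ∈ Finset.Icc m (m + k), X i ⁻¹' {decide (m < i)}) := by
      ext ω
      have hd := (arun_decomp (X := fun i => X i ω) hk m).1
      simp only [hE, Set.mem_union, Set.mem_setOf_eq, Set.mem_inter_iff, Set.mem_iInter,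
        Set.mem_preimage, Set.mem_singleton_iff, Finset.mem_Icc]
      rw [hd]
      constructor
      · rintro (h | ⟨h1, h2, h3⟩)
        · exact Or.inl h
        · exact Or.inr ⟨h1, fun i hi => (cyl_iff (Y := fun i => X i ω)).1 ⟨h2, h3⟩ i hi.1 hi.2⟩
      · rintro (h | ⟨h1, h2⟩)
        · exact Or.inl h
        · have := (cyl_iff (Y := fun i => X i ω)).2 (fun i him hik => h2 i ⟨him, hik⟩)
          exact Or.inr ⟨h1, this.1, this.2⟩
    have hdisj : Disjoint (E (m+k+1))
        (E m ∩ ⋂ i ∈ Finset.Icc m (m + k), X i ⁻¹' {decide (m < i)}) := by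
      rw [Set.disjoint_left]
      rintro ω h1 ⟨h2a, h2b⟩
      have h2b' : ∀ i, m ≤ i → i ≤ m + k → X i ω = decide (m < i) := by
        intro i him hik
        have := Set.mem_iInter₂.1 h2b i (Finset.mem_Icc.2 ⟨him, hik⟩)
        simpa using this
      have hcy := (cyl_iff (Y := fun i => X i ω)).2 h2b'
      exact (arun_decomp (X := fun i => X i ω) hk m).2 ⟨h1, h2a, hcy.1, hcy.2⟩
    rw [hsplit, measure_union hdisj (hcylmeas m k), hcyl m k]
  -- padding inequality
  have hpad : ∀ m, μ (E m) * ENNReal.ofReal (1 - p) ≤ μ (E (m+k)) := by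
    intro m
    have hsub : E m ∩ (⋂ i ∈ Finset.Icc m (m + 0), X i ⁻¹' {decide (m < i)}) ⊆ E (m+k) := by
      rintro ω ⟨h1, h2⟩
      have h2' : X m ω = false := by
        have := Set.mem_iInter₂.1 h2 m (Finset.mem_Icc.2 ⟨le_rfl, by omega⟩)
        simpa using this
      exact arun_pad h1 h2'
    calc μ (E m) * ENNReal.ofReal (1 - p)
        = μ (E m) * (ENNReal.ofReal (1 - p) * ENNReal.ofReal p ^ 0) := by
          rw [pow_zero, mul_one]
      _ = μ (E m ∩ ⋂ i ∈ Finset.Icc m (m + 0), X i ⁻¹' {decide (m < i)}) := (hcyl m 0).symm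
      _ ≤ μ (E (m+k)) := measure_mono hsub
  -- base case
  have hbase : μ (E k) = 1 - ENNReal.ofReal p ^ k := by
    have hiff : E k = (⋂ j ∈ Finset.range k, X j ⁻¹' {true})ᶜ := by
      ext ω
      simp only [hE, Set.mem_setOf_eq, Set.mem_compl_iff, Set.mem_iInter, Set.mem_preimage,
        Set.mem_singleton_iff, Arun, Finset.mem_range]
      constructor
      · intro h hall
        exact h ⟨0, by omega, fun j hj => by simpa using hall j hj⟩
      · rintro h ⟨i, hik, hj⟩
        have hi : i = 0 := by omega
        subst hi
        exact h fun j hjmem => by simpa using hj j hjmem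
    have hprod := hindep.measure_inter_preimage_eq_mul (S := Finset.range k)
      (sets := fun _ => ({true} : Set Bool)) (fun i _ => measurableSet_singleton _)
    have hmeasI : MeasurableSet (⋂ j ∈ Finset.range k, X j ⁻¹' {true}) :=
      MeasurableSet.biInter (Finset.range k).countable_toSet fun j _ => hXtrue j
    have hdist' : ∀ i, μ (X i ⁻¹' ({true} : Set Bool)) = ENNReal.ofReal p := fun i => hdist i
    rw [hiff, prob_compl_eq_one_sub hmeasI, hprod]
    congr 1
    rw [Finset.prod_congr rfl (fun i _ => hdist' i), Finset.prod_const, Finset.card_range]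
  -- pass to reals
  have hfin : ∀ m, μ (E m) ≠ ⊤ := fun m => measure_ne_top μ _
  have hRrec : ∀ m, (μ (E (m+k))).toReal
      = (μ (E (m+k+1))).toReal + (μ (E m)).toReal * ((1 - p) * p ^ k) := by
    intro m
    have h2 := congrArg ENNReal.toReal (hrec m)
    rw [ENNReal.toReal_add (hfin _) (ENNReal.mul_ne_top (hfin _) (ENNReal.mul_ne_top
        ENNReal.ofReal_ne_top (ENNReal.pow_ne_top ENNReal.ofReal_ne_top))),
      ENNReal.toReal_mul, ENNReal.toReal_mul, ENNReal.toReal_pow,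
      ENNReal.toReal_ofReal hq0, ENNReal.toReal_ofReal hp0.le] at h2
    exact h2
  have hRpad : ∀ m, (μ (E m)).toReal * (1 - p) ≤ (μ (E (m+k))).toReal := by
    intro m
    have := (ENNReal.toReal_le_toReal (ENNReal.mul_ne_top (hfin m) ENNReal.ofReal_ne_top)
      (hfin _)).2 (hpad m)
    rwa [ENNReal.toReal_mul, ENNReal.toReal_ofReal hq0] at this
  have hRmono : ∀ {a b : ℕ}, a ≤ b → (μ (E b)).toReal ≤ (μ (E a)).toReal := by
    intro a b hab
    exact (ENNReal.toReal_le_toReal (hfin b) (hfin a)).2 (measure_mono (hmono hab))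
  have hRbase : (μ (E k)).toReal = 1 - p ^ k := by
    rw [hbase, ENNReal.toReal_sub_of_le
      (pow_le_one' (ENNReal.ofReal_le_one.2 hp1.le) k) ENNReal.one_ne_top,
      ENNReal.toReal_pow, ENNReal.toReal_ofReal hp0.le, ENNReal.toReal_one]
  -- real arithmetic facts
  have ha0 : (0:ℝ) ≤ p ^ k := pow_nonneg hp0.le k
  have ha1 : p ^ k ≤ 1 := pow_le_one₀ hp0.le hp1.le
  have hqa0 : (0:ℝ) ≤ (1 - p) * p ^ k := mul_nonneg hq0 ha0
  have hqa1 : (1 - p) * p ^ k ≤ 1 := by nlinarith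
  -- main induction
  have key : ∀ d, (1 - p ^ k) ^ (d + 1) ≤ (μ (E (d + k))).toReal ∧
      (μ (E (d + k))).toReal ≤ (1 - (1 - p) * p ^ k) ^ (d + 1) := by
    intro d
    induction d with
    | zero =>
      simp only [zero_add, pow_one]
      rw [hRbase]
      constructor
      · linarith
      · nlinarith [mul_nonneg hp0.le ha0]
    | succ d ih =>
      obtain ⟨ihl, ihr⟩ := ih
      have hre := hRrec d
      have hpadd := hRpad d
      have hmd : (μ (E (d+k))).toReal ≤ (μ (E d)).toReal := hRmono (by omega)
      have e : d + 1 + k = d + k + 1 := by omega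
      rw [e]
      constructor
      · rw [pow_succ]
        nlinarith [mul_le_mul_of_nonneg_right ihl (by linarith : (0:ℝ) ≤ 1 - p ^ k),
          mul_le_mul_of_nonneg_right hpadd ha0]
      · rw [pow_succ]
        nlinarith [mul_le_mul_of_nonneg_right ihr (by linarith : (0:ℝ) ≤ 1 - (1 - p) * p ^ k),
          mul_le_mul_of_nonneg_right hmd hqa0]
  -- conclude
  have hset : {ω | longestRun (fun i => X i ω) n < k} = E n := by
    ext ω
    simp only [hE, Set.mem_setOf_eq]
    exact longestRun_lt_iff hk
  rw [hset]
  obtain ⟨d, rfl⟩ : ∃ d, n = d + k := ⟨n - k, by omega⟩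
  have e : d + k - k + 1 = d + 1 := by omega
  rw [e]
  exact key d
end

section
/- For i.i.d. Bernoulli(p) trials with 0<p<1 and every fixed x with 0 ≤ x ≤ 1, lim_{n→∞} (1/n) ln P(L(n)/n ≥ x) = -x ln(1/p). -/
open MeasureTheory ProbabilityTheory Filter Set
open scoped ENNReal Classical

section aux
variable {Ω : Type*} [MeasurableSpace Ω] {μ : Measure Ω} [IsProbabilityMeasure μ]
  {X : ℕ → Ω → Bool} {p : ℝ}

omit [IsProbabilityMeasure μ] in
lemma meas_run (hp0 : 0 < p)
    (hindep : iIndepFun X μ)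
    (hdist : ∀ i, μ {ω | X i ω = true} = ENNReal.ofReal p) (i k : ℕ) :
    μ (⋂ m ∈ Finset.Ico i (i+k), {ω | X m ω = true}) = ENNReal.ofReal (p^k) := by
  have : (⋂ m ∈ Finset.Ico i (i+k), {ω | X m ω = true})
      = ⋂ m ∈ Finset.Ico i (i+k), X m ⁻¹' {true} := rfl
  rw [this, hindep.meas_biInter (fun m _ => ⟨{true}, trivial, rfl⟩)]
  have : ∀ m, μ (X m ⁻¹' {true}) = ENNReal.ofReal p := fun m => hdist m
  simp [this, Finset.prod_const, Nat.card_Ico, ← ENNReal.ofReal_pow hp0.le]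

omit [IsProbabilityMeasure μ] in
lemma lower_bound (hp0 : 0 < p)
    (hindep : iIndepFun X μ)
    (hdist : ∀ i, μ {ω | X i ω = true} = ENNReal.ofReal p) {n k : ℕ} (hk : k ≤ n) :
    ENNReal.ofReal (p^k) ≤ μ {ω | k ≤ longestRun (fun i => X i ω) n} := by
  rw [← meas_run hp0 hindep hdist 0 k]
  refine measure_mono fun ω hω => ?_
  simp only [Set.mem_iInter, Set.mem_setOf_eq, Finset.mem_Ico] at hω ⊢
  have hcond : ∃ i, i + k ≤ n ∧ ∀ j < k, X (i + j) ω = true := by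
    exact ⟨0, by simpa using hk, fun j hj => hω (0 + j) ⟨Nat.zero_le _, by omega⟩⟩
  show k ≤ longestRun (fun i => X i ω) n
  unfold longestRun
  refine le_trans ?_ (Finset.le_sup (Finset.mem_range.mpr (Nat.lt_succ_of_le hk)))
  split
  · exact le_rfl
  · next h => exact absurd hcond h

omit [IsProbabilityMeasure μ] in
lemma upper_bound (hp0 : 0 < p)
    (hindep : iIndepFun X μ)
    (hdist : ∀ i, μ {ω | X i ω = true} = ENNReal.ofReal p) (n k : ℕ) :
    μ {ω | k ≤ longestRun (fun i => X i ω) n}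
      ≤ (n + 1) * ENNReal.ofReal (p^k) := by
  have hsub : {ω | k ≤ longestRun (fun i => X i ω) n}
      ⊆ ⋃ i ∈ Finset.range (n+1), ⋂ m ∈ Finset.Ico i (i+k), {ω | X m ω = true} := by
    intro ω hω
    simp only [Set.mem_setOf_eq, longestRun] at hω
    obtain ⟨ℓ, hℓmem, hℓeq⟩ := Finset.exists_mem_eq_sup (Finset.range (n+1))
      ⟨0, Finset.mem_range.mpr (Nat.succ_pos n)⟩
      (fun ℓ => if ∃ i, i + ℓ ≤ n ∧ ∀ j < ℓ, X (i + j) ω = true then ℓ else 0)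
    rw [hℓeq] at hω
    by_cases hc : ∃ i, i + ℓ ≤ n ∧ ∀ j < ℓ, X (i + j) ω = true
    · rw [if_pos hc] at hω
      obtain ⟨i, hin, hrun⟩ := hc
      simp only [Set.mem_iUnion, Set.mem_iInter, Finset.mem_range, Finset.mem_Ico,
        Set.mem_setOf_eq]
      exact ⟨i, by omega, fun m hm => by
        have := hrun (m - i) (by omega); rwa [Nat.add_sub_cancel' hm.1] at this⟩
    · rw [if_neg hc] at hω
      interval_cases k
      simp only [Set.mem_iUnion, Set.mem_iInter, Finset.mem_range, Finset.mem_Ico]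
      exact ⟨0, Nat.succ_pos n, fun m hm => by omega⟩
  calc μ {ω | k ≤ longestRun (fun i => X i ω) n}
      ≤ μ (⋃ i ∈ Finset.range (n+1), ⋂ m ∈ Finset.Ico i (i+k), {ω | X m ω = true}) :=
        measure_mono hsub
    _ ≤ ∑ i ∈ Finset.range (n+1), μ (⋂ m ∈ Finset.Ico i (i+k), {ω | X m ω = true}) :=
        measure_biUnion_finset_le _ _
    _ = (n + 1) * ENNReal.ofReal (p^k) := by
        rw [Finset.sum_congr rfl fun i _ => meas_run hp0 hindep hdist i k, Finset.sum_const,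
          Finset.card_range, nsmul_eq_mul]
        push_cast
        ring
end aux

theorem longestRun_linear_tail_log_asymptotics
    {Ω : Type*} [MeasurableSpace Ω] (μ : Measure Ω) [IsProbabilityMeasure μ]
    (X : ℕ → Ω → Bool) (p : ℝ) (hp0 : 0 < p) (hp1 : p < 1)
    (hmeas : ∀ i, Measurable (X i))
    (hindep : iIndepFun X μ)
    (hdist : ∀ i, μ {ω | X i ω = true} = ENNReal.ofReal p)
    (x : ℝ) (hx0 : 0 ≤ x) (hx1 : x ≤ 1) :
    Tendsto (fun n : ℕ => (1 / (n : ℝ)) *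
        Real.log ((μ {ω | x ≤ (longestRun (fun i => X i ω) n : ℝ) / (n : ℝ)}).toReal))
      atTop (nhds (-x * Real.log (1 / p))) := by
  have hlim : -x * Real.log (1 / p) = x * Real.log p := by
    rw [one_div, Real.log_inv]; ring
  rw [hlim]
  set k : ℕ → ℕ := fun n => ⌈x * n⌉₊ with hk
  -- k n / n → x
  have hkdiv : Tendsto (fun n : ℕ => (k n : ℝ) / n) atTop (nhds x) := by
    refine tendsto_of_tendsto_of_tendsto_of_le_of_le'
      (g := fun _ : ℕ => x) (h := fun n : ℕ => x + 1 / n)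
      tendsto_const_nhds
      (by simpa using (tendsto_const_nhds (x := x)).add tendsto_one_div_atTop_nhds_zero_nat)
      ?_ ?_
    · filter_upwards [eventually_ge_atTop 1] with n hn
      have hn0 : (0:ℝ) < n := by exact_mod_cast hn
      rw [le_div_iff₀ hn0]
      exact Nat.le_ceil _
    · filter_upwards [eventually_ge_atTop 1] with n hn
      have hn0 : (0:ℝ) < n := by exact_mod_cast hn
      rw [div_le_iff₀ hn0]
      have h1 := Nat.ceil_lt_add_one (by positivity : (0:ℝ) ≤ x * n)
      have h2 : ((k n : ℝ)) = (⌈x * (n:ℝ)⌉₊ : ℝ) := rfl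
      have h3 : 1 / (n:ℝ) * n = 1 := one_div_mul_cancel hn0.ne'
      nlinarith [h1, h2, h3]
  have hg : Tendsto (fun n : ℕ => (k n : ℝ) / n * Real.log p) atTop (nhds (x * Real.log p)) :=
    hkdiv.mul_const _
  have hlog : Tendsto (fun n : ℕ => Real.log (n + 1) / n) atTop (nhds 0) := by
    have h1 : Tendsto (fun n : ℕ => Real.log ((n:ℝ) + 1) / ((n:ℝ) + 1)) atTop (nhds 0) :=
      (Real.isLittleO_log_id_atTop.tendsto_div_nhds_zero).comp
        (tendsto_atTop_add_const_right _ 1 tendsto_natCast_atTop_atTop)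
    have h2 : Tendsto (fun n : ℕ => ((n:ℝ) + 1) / n) atTop (nhds 1) := by
      have : Tendsto (fun n : ℕ => 1 + 1 / (n:ℝ)) atTop (nhds 1) := by
        simpa using (tendsto_const_nhds (x := (1:ℝ))).add tendsto_one_div_atTop_nhds_zero_nat
      refine this.congr' ?_
      filter_upwards [eventually_ge_atTop 1] with n hn
      have hn0 : (n:ℝ) ≠ 0 := by positivity
      field_simp
    have := h1.mul h2
    rw [zero_mul] at this
    refine this.congr' ?_
    filter_upwards [eventually_ge_atTop 1] with n hn
    have hn0 : (n:ℝ) ≠ 0 := by positivity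
    have hn1 : (n:ℝ) + 1 ≠ 0 := by positivity
    field_simp
  have hh : Tendsto (fun n : ℕ => (k n : ℝ) / n * Real.log p + Real.log (n + 1) / n)
      atTop (nhds (x * Real.log p)) := by
    simpa using hg.add hlog
  refine tendsto_of_tendsto_of_tendsto_of_le_of_le' hg hh ?_ ?_
  all_goals
    filter_upwards [eventually_ge_atTop 1] with n hn
  all_goals
    have hn0 : (0:ℝ) < n := by exact_mod_cast hn
    have hkn : k n ≤ n := Nat.ceil_le.mpr (by nlinarith)
    have hset : {ω | x ≤ (longestRun (fun i => X i ω) n : ℝ) / (n : ℝ)}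
        = {ω | k n ≤ longestRun (fun i => X i ω) n} := by
      ext ω
      simp only [Set.mem_setOf_eq]
      rw [le_div_iff₀ hn0, hk]
      exact ⟨fun h => Nat.ceil_le.mpr h, fun h => le_trans (Nat.le_ceil _) (by exact_mod_cast h)⟩
    set P := (μ {ω | x ≤ (longestRun (fun i => X i ω) n : ℝ) / (n : ℝ)}).toReal with hP
    have hfin : μ {ω | k n ≤ longestRun (fun i => X i ω) n} ≠ ⊤ :=
      (measure_lt_top _ _).ne
    have hlb : p ^ k n ≤ P := by
      rw [hP, hset]
      have := lower_bound hp0 hindep hdist hkn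
      calc p ^ k n = (ENNReal.ofReal (p ^ k n)).toReal := by
            rw [ENNReal.toReal_ofReal (by positivity)]
        _ ≤ _ := ENNReal.toReal_mono hfin this
    have hub : P ≤ (n + 1) * p ^ k n := by
      rw [hP, hset]
      have := upper_bound hp0 hindep hdist n (k n)
      calc (μ {ω | k n ≤ longestRun (fun i => X i ω) n}).toReal
          ≤ (((n:ℝ≥0∞) + 1) * ENNReal.ofReal (p ^ k n)).toReal :=
            ENNReal.toReal_mono (by finiteness) this
        _ = (n + 1) * p ^ k n := by
            rw [ENNReal.toReal_mul, ENNReal.toReal_ofReal (by positivity)]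
            norm_num [ENNReal.toReal_add]
    have hP0 : 0 < P := lt_of_lt_of_le (by positivity) hlb
    have hloglb : (k n : ℝ) * Real.log p ≤ Real.log P := by
      have := Real.log_le_log (by positivity) hlb
      rwa [Real.log_pow] at this
    have hlogub : Real.log P ≤ Real.log (n + 1) + (k n : ℝ) * Real.log p := by
      have := Real.log_le_log hP0 hub
      rwa [Real.log_mul (by positivity) (by positivity), Real.log_pow] at this
  · -- lower
    calc (k n : ℝ) / n * Real.log p = 1 / n * ((k n : ℝ) * Real.log p) := by ring
      _ ≤ 1 / n * Real.log P := by
          apply mul_le_mul_of_nonneg_left hloglb (by positivity)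
  · -- upper
    calc 1 / (n:ℝ) * Real.log P
        ≤ 1 / n * (Real.log (n + 1) + (k n : ℝ) * Real.log p) := by
          apply mul_le_mul_of_nonneg_left hlogub (by positivity)
      _ = (k n : ℝ) / n * Real.log p + Real.log (n + 1) / n := by ring
end

section
/- For i.i.d. Bernoulli(p) trials with 0<p<1 and any λ > ln(1/p), lim_{n→∞} (1/n) ln E[exp(λ L(n))] = λ - ln(1/p) (supercritical Laplace asymptotics). -/
open MeasureTheory ProbabilityTheory Filter Set
open scoped ENNReal Classical

lemma longestRun_le (X : ℕ → Bool) (n : ℕ) : longestRun X n ≤ n := by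
  apply Finset.sup_le
  intro ℓ hℓ
  rw [Finset.mem_range, Nat.lt_succ_iff] at hℓ
  split <;> omega

lemma longestRun_congr {X Y : ℕ → Bool} {n : ℕ} (h : ∀ i < n, X i = Y i) :
    longestRun X n = longestRun Y n := by
  unfold longestRun
  refine Finset.sup_congr rfl fun ℓ hℓ => ?_
  have : (∃ i, i + ℓ ≤ n ∧ ∀ j < ℓ, X (i + j) = true) ↔
      (∃ i, i + ℓ ≤ n ∧ ∀ j < ℓ, Y (i + j) = true) := by
    constructor
    · rintro ⟨i, h1, h2⟩
      exact ⟨i, h1, fun j hj => (h (i + j) (by omega)).symm.trans (h2 j hj)⟩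
    · rintro ⟨i, h1, h2⟩
      exact ⟨i, h1, (fun j hj => (h (i + j) (by omega)).trans (h2 j hj))⟩
  simp only [this]

lemma longestRun_eq_of_all {X : ℕ → Bool} {n : ℕ} (h : ∀ j < n, X j = true) :
    longestRun X n = n := by
  refine le_antisymm (longestRun_le X n) ?_
  have hmem : n ∈ Finset.range (n + 1) := by simp
  have h2 := Finset.le_sup (f := fun ℓ =>
    if ∃ i, i + ℓ ≤ n ∧ ∀ j < ℓ, X (i + j) = true then ℓ else 0) hmem
  have hc : ∃ i, i + n ≤ n ∧ ∀ j < n, X (i + j) = true :=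
    ⟨0, by omega, fun j hj => by simpa using h j hj⟩
  simp only [if_pos hc] at h2
  exact h2

lemma exists_run_of_le_longestRun {X : ℕ → Bool} {n k : ℕ} (hk : k ≤ longestRun X n) :
    ∃ i, i + k ≤ n ∧ ∀ j < k, X (i + j) = true := by
  rcases Nat.eq_zero_or_pos k with rfl | hk0
  · exact ⟨0, by omega, fun j hj => by omega⟩
  · rw [longestRun, Finset.le_sup_iff (by exact hk0)] at hk
    obtain ⟨ℓ, -, hle⟩ := hk
    by_cases hc : ∃ i, i + ℓ ≤ n ∧ ∀ j < ℓ, X (i + j) = true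
    · rw [if_pos hc] at hle
      obtain ⟨i, h1, h2⟩ := hc
      exact ⟨i, by omega, fun j hj => h2 j (by omega)⟩
    · rw [if_neg hc] at hle; omega

lemma measurable_longestRun {Ω : Type*} [MeasurableSpace Ω] (X : ℕ → Ω → Bool)
    (hX : ∀ i, Measurable (X i)) (n : ℕ) :
    Measurable (fun ω => longestRun (fun i => X i ω) n) := by
  have key : (fun ω => longestRun (fun i => X i ω) n)
      = (fun v : Fin n → Bool =>
          longestRun (fun i => if h : i < n then v ⟨i, h⟩ else false) n)
        ∘ (fun ω (i : Fin n) => X i ω) := by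
    funext ω
    simp only [Function.comp_apply]
    exact longestRun_congr (fun i hi => by simp only [hi, dif_pos])
  rw [key]
  exact (measurable_of_countable _).comp (measurable_pi_lambda _ fun i => hX i)

lemma run_measure {Ω : Type*} [MeasurableSpace Ω] (μ : Measure Ω)
    (X : ℕ → Ω → Bool) (p : ℝ)
    (hindep : iIndepFun X μ)
    (hdist : ∀ i, μ {ω | X i ω = true} = ENNReal.ofReal p) (i k : ℕ) :
    μ {ω | ∀ j < k, X (i + j) ω = true} = ENNReal.ofReal p ^ k := by
  have hinj : Set.InjOn (i + ·) (Finset.range k) := fun a _ b _ h => by simpa using h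
  have key := hindep.measure_inter_preimage_eq_mul ((Finset.range k).image (i + ·))
    (sets := fun _ => {true}) (fun _ _ => measurableSet_singleton _)
  have hset : (⋂ m ∈ (Finset.range k).image (i + ·), X m ⁻¹' {true})
      = {ω | ∀ j < k, X (i + j) ω = true} := by
    ext ω
    simp only [Set.mem_iInter, Finset.mem_image, Finset.mem_range, Set.mem_preimage,
      Set.mem_singleton_iff, Set.mem_setOf_eq]
    constructor
    · intro hm j hj; exact hm (i + j) ⟨j, hj, rfl⟩
    · rintro hm m ⟨j, hj, rfl⟩; exact hm j hj
  have hprod : ∏ m ∈ (Finset.range k).image (i + ·), μ (X m ⁻¹' {true})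
      = ENNReal.ofReal p ^ k := by
    rw [Finset.prod_image (fun a ha b hb h => hinj ha hb h)]
    have : ∀ m, μ (X m ⁻¹' {true}) = ENNReal.ofReal p := fun m => by
      rw [← hdist m]; rfl
    simp [this]
  rw [hset, hprod] at key
  exact key

theorem laplace_supercritical
    {Ω : Type*} [MeasurableSpace Ω] (μ : Measure Ω) [IsProbabilityMeasure μ]
    (X : ℕ → Ω → Bool) (p : ℝ) (hp0 : 0 < p) (hp1 : p < 1)
    (hmeas : ∀ i, Measurable (X i))
    (hindep : iIndepFun X μ)
    (hdist : ∀ i, μ {ω | X i ω = true} = ENNReal.ofReal p)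
    (l : ℝ) (hl : Real.log (1 / p) < l) :
    Tendsto (fun n : ℕ =>
        (1 / (n : ℝ)) *
          Real.log (∫ ω, Real.exp (l * (longestRun (fun i => X i ω) n : ℝ)) ∂μ))
      atTop (nhds (l - Real.log (1 / p))) := by
  have hlogp : Real.log (1 / p) = - Real.log p := by rw [one_div, Real.log_inv]
  have hlp : 0 < l + Real.log p := by rw [hlogp] at hl; linarith
  set r : ℝ := Real.exp l * p with hrdef
  have hrpos : 0 < r := mul_pos (Real.exp_pos l) hp0
  have hr1 : 1 < r := by
    have hre : r = Real.exp (l + Real.log p) := by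
      rw [Real.exp_add, Real.exp_log hp0]
    calc (1:ℝ) = Real.exp 0 := (Real.exp_zero).symm
      _ < Real.exp (l + Real.log p) := Real.exp_lt_exp.mpr hlp
      _ = r := hre.symm
  have hlpos : 0 < l := lt_trans (Real.log_pos ((one_lt_div hp0).mpr hp1)) hl
  have hlogr : Real.log r = l - Real.log (1 / p) := by
    rw [hrdef, Real.log_mul (Real.exp_ne_zero l) (ne_of_gt hp0), Real.log_exp, hlogp]
    ring
  have hcast : Measurable (fun m : ℕ => (m : ℝ)) := measurable_of_countable _
  -- main bounds
  have key : ∀ n : ℕ,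
      r ^ n ≤ (∫ ω, Real.exp (l * (longestRun (fun i => X i ω) n : ℝ)) ∂μ) ∧
      (∫ ω, Real.exp (l * (longestRun (fun i => X i ω) n : ℝ)) ∂μ) ≤ ((n : ℝ) + 1) ^ 2 * r ^ n := by
    intro n
    set L : Ω → ℕ := fun ω => longestRun (fun i => X i ω) n with hLdef
    have hLmeas : Measurable L := measurable_longestRun X hmeas n
    have hLle : ∀ ω, L ω ≤ n := fun ω => longestRun_le _ n
    set f : Ω → ℝ := fun ω => Real.exp (l * (L ω : ℝ)) with hfdef
    have hfmeas : Measurable f :=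
      Real.measurable_exp.comp (measurable_const.mul (hcast.comp hLmeas))
    have hfnonneg : ∀ ω, 0 ≤ f ω := fun ω => (Real.exp_pos _).le
    have hfbound : ∀ ω, f ω ≤ Real.exp (l * n) := fun ω =>
      Real.exp_le_exp.mpr (mul_le_mul_of_nonneg_left (Nat.cast_le.mpr (hLle ω)) hlpos.le)
    have hfint : Integrable f μ := by
      refine (integrable_const (Real.exp (l * n))).mono' hfmeas.aestronglyMeasurable ?_
      filter_upwards with ω
      rw [Real.norm_eq_abs, abs_of_nonneg (hfnonneg ω)]
      exact hfbound ω
    constructor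
    · -- lower bound
      set A : Set Ω := {ω | ∀ j < n, X j ω = true} with hAdef
      have hAmeas : MeasurableSet A := by
        have : A = ⋂ j, ⋂ (_ : j < n), (X j) ⁻¹' {true} := by
          ext ω; simp [hAdef, Set.mem_iInter]
        rw [this]
        exact MeasurableSet.iInter fun j => MeasurableSet.iInter fun _ =>
          (hmeas j) (measurableSet_singleton true)
      have hAmeasure : μ A = ENNReal.ofReal p ^ n := by
        have := run_measure μ X p hindep hdist 0 n
        simpa [hAdef] using this
      have hgle : ∀ ω, Set.indicator A (fun _ => Real.exp (l * n)) ω ≤ f ω := by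
        intro ω
        by_cases hω : ω ∈ A
        · rw [Set.indicator_of_mem hω]
          have hLn : L ω = n := longestRun_eq_of_all hω
          rw [hfdef]
          simp [hLn]
        · rw [Set.indicator_of_notMem hω]
          exact hfnonneg ω
      have hint : ∫ ω, Set.indicator A (fun _ => Real.exp (l * n)) ω ∂μ
          = (μ A).toReal • Real.exp (l * n) := integral_indicator_const _ hAmeas
      calc r ^ n = Real.exp (l * n) * p ^ n := by
            rw [hrdef, mul_pow, mul_comm l (n : ℝ), Real.exp_nat_mul]
        _ = (μ A).toReal • Real.exp (l * n) := by
            rw [hAmeasure, smul_eq_mul]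
            rw [ENNReal.toReal_pow, ENNReal.toReal_ofReal hp0.le]
            ring
        _ = ∫ ω, Set.indicator A (fun _ => Real.exp (l * n)) ω ∂μ := hint.symm
        _ ≤ ∫ ω, f ω ∂μ :=
            integral_mono ((integrable_const _).indicator hAmeas) hfint hgle
    · -- upper bound
      have hSmeas : ∀ k : ℕ, MeasurableSet {ω | k ≤ L ω} :=
        fun k => hLmeas ((Set.to_countable _).measurableSet)
      set g : Ω → ℝ := fun ω => ∑ k ∈ Finset.range (n + 1),
        Set.indicator {ω | k ≤ L ω} (fun _ => Real.exp (l * k)) ω with hgdef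
      have hptle : ∀ ω, f ω ≤ g ω := by
        intro ω
        have hm : L ω ∈ Finset.range (n + 1) := by
          simp [Nat.lt_succ_iff, hLle ω]
        have hsum := Finset.single_le_sum (f := fun k =>
            Set.indicator {ω' | k ≤ L ω'} (fun _ => Real.exp (l * k)) ω)
          (fun k _ => Set.indicator_nonneg (fun _ _ => (Real.exp_pos _).le) ω) hm
        rw [Set.indicator_of_mem (show ω ∈ {ω' | L ω ≤ L ω'} from le_refl (L ω))] at hsum
        exact hsum
      have hgint : Integrable g μ :=
        integrable_finset_sum _ fun k _ => (integrable_const _).indicator (hSmeas k)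
      have htail : ∀ k : ℕ, (μ {ω | k ≤ L ω}).toReal ≤ ((n : ℝ) + 1) * p ^ k := by
        intro k
        have hsub : {ω | k ≤ L ω} ⊆
            ⋃ i ∈ Finset.range (n + 1), {ω | ∀ j < k, X (i + j) ω = true} := by
          intro ω hω
          obtain ⟨i, h1, h2⟩ := exists_run_of_le_longestRun hω
          simp only [Set.mem_iUnion]
          exact ⟨i, Finset.mem_range.mpr (by omega), h2⟩
        have hle1 := (measure_mono hsub).trans
          (measure_biUnion_finset_le (μ := μ) (Finset.range (n + 1))
            (fun i => {ω | ∀ j < k, X (i + j) ω = true}))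
        have hle2 : μ {ω | k ≤ L ω} ≤ ((n : ℕ) + 1 : ℕ) * ENNReal.ofReal p ^ k := by
          refine hle1.trans ?_
          rw [Finset.sum_congr rfl (fun i _ => run_measure μ X p hindep hdist i k)]
          simp [Finset.sum_const, nsmul_eq_mul]
        have hfin : (((n : ℕ) + 1 : ℕ) * ENNReal.ofReal p ^ k : ℝ≥0∞) ≠ ⊤ := by
          exact ENNReal.mul_ne_top (by simp) (by simp [ENNReal.pow_ne_top])
        have := ENNReal.toReal_mono hfin hle2
        rw [ENNReal.toReal_mul, ENNReal.toReal_pow, ENNReal.toReal_ofReal hp0.le] at this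
        refine this.trans (le_of_eq ?_)
        rw [ENNReal.toReal_natCast]
        push_cast
        ring
      have hgval : ∫ ω, g ω ∂μ = ∑ k ∈ Finset.range (n + 1),
          (μ {ω | k ≤ L ω}).toReal • Real.exp (l * k) := by
        rw [hgdef, integral_finset_sum _
          (fun k _ => (integrable_const _).indicator (hSmeas k))]
        exact Finset.sum_congr rfl fun k _ => integral_indicator_const _ (hSmeas k)
      have hterm : ∀ k ∈ Finset.range (n + 1),
          (μ {ω | k ≤ L ω}).toReal • Real.exp (l * k) ≤ ((n : ℝ) + 1) * r ^ n := by
        intro k hk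
        rw [Finset.mem_range, Nat.lt_succ_iff] at hk
        rw [smul_eq_mul]
        have h1 : (μ {ω | k ≤ L ω}).toReal * Real.exp (l * k)
            ≤ (((n : ℝ) + 1) * p ^ k) * Real.exp (l * k) :=
          mul_le_mul_of_nonneg_right (htail k) (Real.exp_pos _).le
        refine h1.trans ?_
        have h2 : p ^ k * Real.exp (l * k) = r ^ k := by
          rw [hrdef, mul_pow, mul_comm l (k : ℝ), Real.exp_nat_mul]
          ring
        have h3 : r ^ k ≤ r ^ n := pow_le_pow_right₀ hr1.le hk
        calc ((n : ℝ) + 1) * p ^ k * Real.exp (l * k)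
            = ((n : ℝ) + 1) * (p ^ k * Real.exp (l * k)) := by ring
          _ = ((n : ℝ) + 1) * r ^ k := by rw [h2]
          _ ≤ ((n : ℝ) + 1) * r ^ n :=
            mul_le_mul_of_nonneg_left h3 (by positivity)
      calc ∫ ω, f ω ∂μ ≤ ∫ ω, g ω ∂μ := integral_mono hfint hgint hptle
        _ = ∑ k ∈ Finset.range (n + 1),
            (μ {ω | k ≤ L ω}).toReal • Real.exp (l * k) := hgval
        _ ≤ ∑ _k ∈ Finset.range (n + 1), ((n : ℝ) + 1) * r ^ n :=
            Finset.sum_le_sum hterm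
        _ = ((n : ℝ) + 1) ^ 2 * r ^ n := by
            rw [Finset.sum_const, Finset.card_range, nsmul_eq_mul]
            push_cast
            ring
  -- the limit
  set I : ℕ → ℝ := fun n => ∫ ω, Real.exp (l * (longestRun (fun i => X i ω) n : ℝ)) ∂μ
    with hIdef
  have hIpos : ∀ n, 0 < I n := fun n => lt_of_lt_of_le (pow_pos hrpos n) (key n).1
  rw [show l - Real.log (1 / p) = Real.log r from hlogr.symm]
  have hlower : ∀ᶠ n : ℕ in atTop, Real.log r ≤ (1 / (n : ℝ)) * Real.log (I n) := by
    filter_upwards [eventually_ge_atTop 1] with n hn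
    have hnpos : (0 : ℝ) < n := by exact_mod_cast hn
    have h1 : Real.log (r ^ n) ≤ Real.log (I n) :=
      Real.log_le_log (pow_pos hrpos n) (key n).1
    rw [Real.log_pow] at h1
    have h2 : (1 / (n : ℝ)) * ((n : ℝ) * Real.log r) ≤ (1 / (n : ℝ)) * Real.log (I n) :=
      mul_le_mul_of_nonneg_left (by exact_mod_cast h1) (by positivity)
    rw [show (1 : ℝ) / (n : ℝ) * ((n : ℝ) * Real.log r) = Real.log r by field_simp] at h2
    exact h2
  have hupper : ∀ᶠ n : ℕ in atTop,
      (1 / (n : ℝ)) * Real.log (I n) ≤ Real.log r + 2 * Real.log ((n : ℝ) + 1) / n := by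
    filter_upwards [eventually_ge_atTop 1] with n hn
    have hnpos : (0 : ℝ) < n := by exact_mod_cast hn
    have h1 : Real.log (I n) ≤ Real.log (((n : ℝ) + 1) ^ 2 * r ^ n) :=
      Real.log_le_log (hIpos n) (key n).2
    rw [Real.log_mul (by positivity) (by positivity), Real.log_pow, Real.log_pow] at h1
    calc (1 / (n : ℝ)) * Real.log (I n)
        ≤ (1 / (n : ℝ)) * ((2 : ℕ) * Real.log ((n : ℝ) + 1) + (n : ℕ) * Real.log r) := by
          apply mul_le_mul_of_nonneg_left h1 (by positivity)
      _ = Real.log r + 2 * Real.log ((n : ℝ) + 1) / n := by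
          push_cast
          field_simp
          ring
  have hnull : Tendsto (fun n : ℕ => 2 * Real.log ((n : ℝ) + 1) / n) atTop (nhds 0) := by
    have hA : Tendsto (fun x : ℝ => Real.log x / x) atTop (nhds 0) :=
      Real.isLittleO_log_id_atTop.tendsto_div_nhds_zero
    have hB : Tendsto (fun n : ℕ => Real.log ((n : ℝ) + 1) / ((n : ℝ) + 1)) atTop (nhds 0) :=
      hA.comp (tendsto_atTop_add_const_right _ 1 tendsto_natCast_atTop_atTop)
    have hC : Tendsto (fun n : ℕ => ((n : ℝ) + 1) / n) atTop (nhds 1) := by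
      have h1 : Tendsto (fun n : ℕ => 1 + ((n : ℝ))⁻¹) atTop (nhds (1 + 0)) :=
        tendsto_const_nhds.add tendsto_inv_atTop_nhds_zero_nat
      rw [add_zero] at h1
      refine h1.congr' ?_
      filter_upwards [eventually_ge_atTop 1] with n hn
      have hnpos : (0 : ℝ) < n := by exact_mod_cast hn
      field_simp
    have hD := hB.mul hC
    rw [mul_one] at hD
    have hE : Tendsto (fun n : ℕ => Real.log ((n : ℝ) + 1) / n) atTop (nhds 0) := by
      refine hD.congr fun n => ?_
      have hb : ((n : ℝ) + 1) ≠ 0 := by positivity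
      rw [div_mul_div_comm, mul_comm (Real.log ((n : ℝ) + 1)) ((n : ℝ) + 1),
        mul_div_mul_left _ _ hb]
    have := hE.const_mul (2 : ℝ)
    rw [mul_zero] at this
    refine this.congr fun n => ?_
    ring
  have hbnd : Tendsto (fun n : ℕ => Real.log r + 2 * Real.log ((n : ℝ) + 1) / n)
      atTop (nhds (Real.log r)) := by
    have h := Tendsto.add
      (tendsto_const_nhds : Tendsto (fun _ : ℕ => Real.log r) atTop (nhds (Real.log r))) hnull
    rwa [add_zero] at h
  exact tendsto_of_tendsto_of_tendsto_of_le_of_le' tendsto_const_nhds hbnd hlower hupper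
end

section
/- For i.i.d. Bernoulli(p) trials with 0<p<1 and every x>0, lim_{n→∞} (1/log_{1/p} n) ln P(L(n)/log_{1/p} n ≥ 1+x) = -x ln(1/p). -/
open MeasureTheory ProbabilityTheory Filter Set
open scoped ENNReal Classical

lemma longestRun_ge_iff (X : ℕ → Bool) (n k : ℕ) (hk : 0 < k) :
    k ≤ longestRun X n ↔ ∃ i, i + k ≤ n ∧ ∀ j < k, X (i + j) = true := by
  constructor
  · intro h
    rw [longestRun, Finset.le_sup_iff hk] at h
    obtain ⟨ℓ, -, hle⟩ := h
    by_cases hex : ∃ i, i + ℓ ≤ n ∧ ∀ j < ℓ, X (i + j) = true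
    · rw [if_pos hex] at hle
      obtain ⟨i, hin, hrun⟩ := hex
      exact ⟨i, le_trans (by omega) hin, fun j hj => hrun j (lt_of_lt_of_le hj hle)⟩
    · rw [if_neg hex] at hle; omega
  · rintro ⟨i, hin, hrun⟩
    have hmem : k ∈ Finset.range (n + 1) := by
      simp only [Finset.mem_range]; omega
    have := Finset.le_sup (f := fun ℓ =>
      if ∃ i, i + ℓ ≤ n ∧ ∀ j < ℓ, X (i + j) = true then ℓ else 0) hmem
    rw [if_pos ⟨i, hin, hrun⟩] at this
    unfold longestRun
    exact this

lemma bonferroni {Ω : Type*} [MeasurableSpace Ω] (μ : Measure Ω) (A : ℕ → Set Ω)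
    (hA : ∀ t, MeasurableSet (A t)) (m : ℕ) :
    ∑ t ∈ Finset.range m, μ (A t) ≤ μ (⋃ t ∈ Finset.range m, A t)
      + ∑ t ∈ Finset.range m, ∑ s ∈ Finset.range t, μ (A s ∩ A t) := by
  induction m with
  | zero => simp
  | succ m ih =>
    rw [Finset.sum_range_succ,
      Finset.sum_range_succ (f := fun t => ∑ s ∈ Finset.range t, μ (A s ∩ A t))]
    set U := ⋃ t ∈ Finset.range m, A t with hUdef
    have hU : (⋃ t ∈ Finset.range (m + 1), A t) = U ∪ A m := by
      rw [hUdef, Finset.range_add_one]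
      simp [Set.union_comm]
    have key : μ U + μ (A m) = μ (U ∪ A m) + μ (U ∩ A m) :=
      (measure_union_add_inter U (hA m)).symm
    have hint : μ (U ∩ A m) ≤ ∑ s ∈ Finset.range m, μ (A s ∩ A m) := by
      rw [hUdef, Set.iUnion₂_inter]
      exact measure_biUnion_finset_le _ _
    calc ∑ t ∈ Finset.range m, μ (A t) + μ (A m)
        ≤ (μ U + ∑ t ∈ Finset.range m, ∑ s ∈ Finset.range t, μ (A s ∩ A t)) + μ (A m) := by
          exact add_le_add_left ih _
      _ = (μ U + μ (A m)) + ∑ t ∈ Finset.range m, ∑ s ∈ Finset.range t, μ (A s ∩ A t) := by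
          ring
      _ = (μ (U ∪ A m) + μ (U ∩ A m)) + ∑ t ∈ Finset.range m, ∑ s ∈ Finset.range t, μ (A s ∩ A t) := by
          rw [key]
      _ ≤ μ (⋃ t ∈ Finset.range (m + 1), A t)
          + (∑ t ∈ Finset.range m, ∑ s ∈ Finset.range t, μ (A s ∩ A t)
            + ∑ s ∈ Finset.range m, μ (A s ∩ A m)) := by
          rw [hU]
          calc μ (U ∪ A m) + μ (U ∩ A m)
              + ∑ t ∈ Finset.range m, ∑ s ∈ Finset.range t, μ (A s ∩ A t)
              ≤ μ (U ∪ A m) + ∑ s ∈ Finset.range m, μ (A s ∩ A m)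
                + ∑ t ∈ Finset.range m, ∑ s ∈ Finset.range t, μ (A s ∩ A t) := by
                gcongr
            _ = _ := by ring

lemma meas_allTrue {Ω : Type*} [MeasurableSpace Ω] (μ : Measure Ω)
    (X : ℕ → Ω → Bool) (p : ℝ)
    (hindep : iIndepFun X μ)
    (hdist : ∀ i, μ {ω | X i ω = true} = ENNReal.ofReal p)
    (s : Finset ℕ) :
    μ {ω | ∀ i ∈ s, X i ω = true} = ENNReal.ofReal p ^ s.card := by
  have hset : {ω | ∀ i ∈ s, X i ω = true} = ⋂ i ∈ s, X i ⁻¹' {true} := by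
    ext ω; simp
  rw [hset, hindep.measure_inter_preimage_eq_mul s (sets := fun _ => {true})
    (fun i _ => measurableSet_singleton true)]
  have : ∀ i, X i ⁻¹' {true} = {ω | X i ω = true} := fun i => by ext ω; simp
  simp_rw [this, hdist, Finset.prod_const]

lemma measSet_allTrue {Ω : Type*} [MeasurableSpace Ω]
    (X : ℕ → Ω → Bool) (hmeas : ∀ i, Measurable (X i)) (s : Finset ℕ) :
    MeasurableSet {ω | ∀ i ∈ s, X i ω = true} := by
  have hset : {ω | ∀ i ∈ s, X i ω = true} = ⋂ i ∈ s, X i ⁻¹' {true} := by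
    ext ω; simp
  rw [hset]
  exact Finset.measurableSet_biInter s fun i _ => (hmeas i) (measurableSet_singleton true)

set_option maxHeartbeats 1000000 in
theorem longestRun_upper_tail_near_nominal
    {Ω : Type*} [MeasurableSpace Ω] (μ : Measure Ω) [IsProbabilityMeasure μ]
    (X : ℕ → Ω → Bool) (p : ℝ) (hp0 : 0 < p) (hp1 : p < 1)
    (hmeas : ∀ i, Measurable (X i))
    (hindep : iIndepFun X μ)
    (hdist : ∀ i, μ {ω | X i ω = true} = ENNReal.ofReal p)
    (x : ℝ) (hx : 0 < x) :
    Tendsto (fun n : ℕ =>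
        (Real.log n / Real.log (1 / p))⁻¹ *
          Real.log ((μ {ω | 1 + x ≤
            (longestRun (fun i => X i ω) n : ℝ) / (Real.log n / Real.log (1 / p))}).toReal))
      atTop (nhds (-(x * Real.log (1 / p)))) := by
  have hL₀0 : 0 < Real.log (1 / p) := Real.log_pos (one_lt_one_div hp0 hp1)
  obtain ⟨L₀, hL₀def⟩ : ∃ a : ℝ, a = Real.log (1 / p) := ⟨_, rfl⟩
  rw [← hL₀def]
  have hL₀ : 0 < L₀ := hL₀def ▸ hL₀0
  have hlogp : Real.log p < 0 := Real.log_neg hp0 hp1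
  have hlogp' : Real.log p ≠ 0 := hlogp.ne
  have hL₀eq : L₀ = -Real.log p := by rw [hL₀def, one_div, Real.log_inv]
  obtain ⟨c, hcdef⟩ : ∃ c : ℝ, c = 1 + x := ⟨_, rfl⟩
  have hc1 : 1 < c := by rw [hcdef]; linarith
  have hc0 : 0 < c := by linarith
  obtain ⟨C, hCdef⟩ : ∃ C : ℝ, C = Real.log 4 - Real.log p := ⟨_, rfl⟩
  have hC0 : 0 ≤ C := by
    have h4 : (0:ℝ) < Real.log 4 := Real.log_pos (by norm_num)
    rw [hCdef]; linarith
  obtain ⟨D, hDdef⟩ : ∃ D : ℝ, D = c / L₀ + 1 := ⟨_, rfl⟩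
  have hD0 : 0 < D := by rw [hDdef]; positivity
  obtain ⟨k, hkdef⟩ : ∃ k : ℕ → ℕ, ∀ n : ℕ, k n = ⌈c * (Real.log n / L₀)⌉₊ :=
    ⟨_, fun _ => rfl⟩
  set q : ℝ≥0∞ := ENNReal.ofReal p with hqdef
  -- eventual facts
  have hloglarge : ∀ᶠ n : ℕ in atTop, 1 ≤ Real.log n := by
    filter_upwards [eventually_ge_atTop 3] with n hn
    have h3 : (3:ℝ) ≤ (n:ℝ) := by exact_mod_cast hn
    rw [Real.le_log_iff_exp_le (by linarith)]
    calc Real.exp 1 ≤ 2.7182818286 := Real.exp_one_lt_d9.le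
      _ ≤ (n:ℝ) := by linarith
  -- k n ≤ D * log n when 1 ≤ log n
  have hkD : ∀ n : ℕ, 1 ≤ Real.log n → (k n : ℝ) ≤ D * Real.log n := by
    intro n hn
    have h1 : (k n : ℝ) < c * (Real.log n / L₀) + 1 := by
      rw [hkdef]; exact Nat.ceil_lt_add_one (by positivity)
    have h2 : c * (Real.log n / L₀) + 1 ≤ D * Real.log n := by
      rw [hDdef]
      have e : c * (Real.log n / L₀) = c / L₀ * Real.log n := by ring
      rw [e]
      nlinarith [div_pos hc0 hL₀]
    linarith
  have hk1 : ∀ n : ℕ, 1 ≤ Real.log n → 1 ≤ k n := by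
    intro n hn
    rw [hkdef]
    refine Nat.one_le_iff_ne_zero.mpr (Nat.ceil_pos.mpr ?_).ne'
    have : 0 < Real.log n := by linarith
    positivity
  -- eventually 2 * k n ≤ n
  have h2k : ∀ᶠ n : ℕ in atTop, 2 * k n ≤ n := by
    have h1 : Tendsto (fun t : ℝ => Real.log t / t) atTop (nhds 0) :=
      Real.isLittleO_log_id_atTop.tendsto_div_nhds_zero
    have h2 : Tendsto (fun t : ℝ => 2 * D * (Real.log t / t)) atTop (nhds 0) := by
      simpa using h1.const_mul (2 * D)
    have h3 : ∀ᶠ t : ℝ in atTop, 2 * D * (Real.log t / t) ≤ 1 :=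
      h2.eventually_le_const (by norm_num)
    have h4 : ∀ᶠ n : ℕ in atTop, 2 * D * (Real.log n / n) ≤ 1 :=
      tendsto_natCast_atTop_atTop.eventually h3
    filter_upwards [h4, hloglarge, eventually_ge_atTop 1] with n hn hlog hn1
    have hnpos : (0:ℝ) < n := by exact_mod_cast hn1
    have h5 : 2 * D * Real.log n ≤ n := by
      have := mul_le_mul_of_nonneg_right hn hnpos.le
      calc 2 * D * Real.log n = 2 * D * (Real.log n / n) * n := by field_simp
        _ ≤ 1 * n := this
        _ = n := one_mul _
    have h6 : 2 * (k n : ℝ) ≤ (n : ℝ) := by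
      have := hkD n hlog
      nlinarith
    exact_mod_cast h6
  -- key rpow estimate
  have hpk : ∀ n : ℕ, 0 < Real.log n → (n:ℝ) * p ^ k n ≤ (n:ℝ) ^ (-x) := by
    intro n hlogn
    have hn0 : n ≠ 0 := by rintro rfl; simp at hlogn
    have hnpos : (0:ℝ) < n := by positivity
    have hrlp : Real.log n / L₀ * Real.log p = -Real.log n := by
      rw [hL₀eq, div_neg, neg_mul, div_mul_eq_mul_div, mul_div_assoc,
        div_self hlogp', mul_one]
    have h1 : p ^ k n ≤ (n:ℝ) ^ (-c) := by
      have e1 : p ^ k n = p ^ ((k n : ℝ)) := (Real.rpow_natCast p (k n)).symm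
      rw [e1]
      have e2 : p ^ ((k n : ℝ)) ≤ p ^ (c * (Real.log n / L₀)) := by
        refine Real.rpow_le_rpow_of_exponent_ge hp0 hp1.le ?_
        rw [hkdef]; exact Nat.le_ceil _
      have e3 : p ^ (c * (Real.log n / L₀)) = (n:ℝ) ^ (-c) := by
        rw [Real.rpow_def_of_pos hp0, Real.rpow_def_of_pos hnpos]
        congr 1
        calc Real.log p * (c * (Real.log n / L₀))
            = (Real.log n / L₀ * Real.log p) * c := by ring
          _ = -Real.log n * c := by rw [hrlp]
          _ = Real.log n * -c := by ring
      exact e2.trans_eq e3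
    calc (n:ℝ) * p ^ k n ≤ (n:ℝ) * (n:ℝ) ^ (-c) := by
          have := pow_nonneg hp0.le (k n)
          nlinarith [Real.rpow_nonneg hnpos.le (-c)]
      _ = (n:ℝ) ^ ((1:ℝ) + -c) := by
          rw [Real.rpow_add hnpos, Real.rpow_one]
      _ = (n:ℝ) ^ (-x) := by rw [hcdef]; norm_num
  have hhalf : ∀ᶠ n : ℕ in atTop, (n:ℝ) * p ^ k n ≤ 1 / 2 := by
    have h1 : Tendsto (fun n : ℕ => (n:ℝ) ^ (-x)) atTop (nhds 0) :=
      (tendsto_rpow_neg_atTop hx).comp tendsto_natCast_atTop_atTop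
    have h2 : ∀ᶠ n : ℕ in atTop, (n:ℝ) ^ (-x) ≤ 1/2 :=
      h1.eventually_le_const (by norm_num)
    filter_upwards [h2, hloglarge] with n hn hlog
    exact (hpk n (by linarith)).trans hn
  -- identity used repeatedly
  have hrlp : ∀ n : ℕ, Real.log n / L₀ * Real.log p = -Real.log n := by
    intro n
    rw [hL₀eq, div_neg, neg_mul, div_mul_eq_mul_div, mul_div_assoc,
      div_self hlogp', mul_one]
  -- the central probability bounds
  have hbounds : ∀ n : ℕ, 1 ≤ Real.log n → 2 * k n ≤ n → (n:ℝ) * p ^ k n ≤ 1/2 →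
      ((n:ℝ) * p ^ k n / (4 * k n) ≤ (μ {ω | 1 + x ≤
          (longestRun (fun i => X i ω) n : ℝ) / (Real.log n / L₀)}).toReal ∧
        (μ {ω | 1 + x ≤ (longestRun (fun i => X i ω) n : ℝ) / (Real.log n / L₀)}).toReal
          ≤ (n:ℝ) * p ^ k n) := by
    intro n hlog h2kn hhalfn
    have hlogpos : 0 < Real.log n := by linarith
    have hn0 : n ≠ 0 := by rintro rfl; simp at hlogpos
    have hnposR : (0:ℝ) < n := by positivity
    have hkn1 : 1 ≤ k n := hk1 n hlog
    have hknpos : 0 < k n := hkn1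
    have hknR : (0:ℝ) < k n := by exact_mod_cast hkn1
    have hrpos : 0 < Real.log n / L₀ := by positivity
    have hEset : {ω | 1 + x ≤ (longestRun (fun i => X i ω) n : ℝ) / (Real.log n / L₀)}
        = {ω : Ω | k n ≤ longestRun (fun i => X i ω) n} := by
      ext ω
      simp only [Set.mem_setOf_eq]
      rw [le_div_iff₀ hrpos]
      constructor
      · intro h
        rw [hkdef]
        exact Nat.ceil_le.mpr (by rw [hcdef]; exact_mod_cast h)
      · intro h
        calc (1+x) * (Real.log n / L₀) = c * (Real.log n / L₀) := by rw [hcdef]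
          _ ≤ (k n : ℝ) := by rw [hkdef]; exact Nat.le_ceil _
          _ ≤ _ := by exact_mod_cast h
    rw [hEset]
    set K := {ω : Ω | k n ≤ longestRun (fun i => X i ω) n} with hKdef
    clear_value K
    -- upper bound in ℝ≥0∞
    have hupper : μ K ≤ (n : ℝ≥0∞) * q ^ k n := by
      have hsub : K ⊆ ⋃ i ∈ Finset.range (n - k n + 1),
          {ω | ∀ i' ∈ (Finset.range (k n)).image (fun j => i + j), X i' ω = true} := by
        intro ω hω
        rw [hKdef] at hω
        obtain ⟨i, hin, hrun⟩ := (longestRun_ge_iff _ n (k n) hknpos).mp hω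
        have hiR : i ∈ Finset.range (n - k n + 1) := Finset.mem_range.mpr (by omega)
        refine Set.mem_biUnion hiR ?_
        intro i' hi'
        obtain ⟨j, hj, rfl⟩ := Finset.mem_image.mp hi'
        exact hrun j (Finset.mem_range.mp hj)
      calc μ K ≤ μ (⋃ i ∈ Finset.range (n - k n + 1),
            {ω | ∀ i' ∈ (Finset.range (k n)).image (fun j => i + j), X i' ω = true}) :=
            measure_mono hsub
        _ ≤ ∑ i ∈ Finset.range (n - k n + 1),
            μ {ω | ∀ i' ∈ (Finset.range (k n)).image (fun j => i + j), X i' ω = true} :=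
            measure_biUnion_finset_le _ _
        _ = ∑ _i ∈ Finset.range (n - k n + 1), q ^ k n := by
            refine Finset.sum_congr rfl fun i _ => ?_
            rw [meas_allTrue μ X p hindep hdist,
              Finset.card_image_of_injective _ (fun a b hab => by omega), Finset.card_range]
        _ = ((n - k n + 1 : ℕ) : ℝ≥0∞) * q ^ k n := by
            rw [Finset.sum_const, Finset.card_range, nsmul_eq_mul]
        _ ≤ (n : ℝ≥0∞) * q ^ k n := by
            gcongr
            exact_mod_cast (by omega : n - k n + 1 ≤ n)
    -- lower bound in ℝ≥0∞ via Bonferroni on disjoint blocks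
    set m := n / k n with hm
    clear_value m
    have hm1 : 1 ≤ m := by rw [hm]; exact (Nat.one_le_div_iff hknpos).mpr (by omega)
    set A : ℕ → Set Ω := fun t =>
      {ω | ∀ i ∈ (Finset.range (k n)).image (fun j => t * k n + j), X i ω = true} with hAdef
    clear_value A
    have hAmeas : ∀ t, MeasurableSet (A t) := by
      intro t; rw [hAdef]; exact measSet_allTrue X hmeas _
    have hA : ∀ t, μ (A t) = q ^ k n := by
      intro t
      rw [hAdef]
      rw [meas_allTrue μ X p hindep hdist,
        Finset.card_image_of_injective _ (fun a b hab => by omega), Finset.card_range]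
    have hApair : ∀ s t : ℕ, s < t → μ (A s ∩ A t) = q ^ (2 * k n) := by
      intro s t hst
      have hset : A s ∩ A t = {ω | ∀ i ∈ ((Finset.range (k n)).image (fun j => s * k n + j))
          ∪ ((Finset.range (k n)).image fun j => t * k n + j), X i ω = true} := by
        ext ω
        simp only [hAdef, Set.mem_inter_iff, Set.mem_setOf_eq, Finset.mem_union]
        constructor
        · rintro ⟨h1, h2⟩ i hi
          rcases hi with hi | hi
          · exact h1 i hi
          · exact h2 i hi
        · intro h
          exact ⟨fun i hi => h i (Or.inl hi), fun i hi => h i (Or.inr hi)⟩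
      have hdisj : Disjoint ((Finset.range (k n)).image (fun j => s * k n + j))
          ((Finset.range (k n)).image fun j => t * k n + j) := by
        rw [Finset.disjoint_left]
        intro a ha hb
        obtain ⟨j1, hj1, rfl⟩ := Finset.mem_image.mp ha
        obtain ⟨j2, hj2, he⟩ := Finset.mem_image.mp hb
        rw [Finset.mem_range] at hj1 hj2
        have e1 : (s + 1) * k n ≤ t * k n := Nat.mul_le_mul_right _ (by omega)
        have e2 : (s + 1) * k n = s * k n + k n := by ring
        linarith
      rw [hset, meas_allTrue μ X p hindep hdist, Finset.card_union_of_disjoint hdisj,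
        Finset.card_image_of_injective _ (fun a b hab => by omega),
        Finset.card_image_of_injective _ (fun a b hab => by omega), Finset.card_range, two_mul]
    have hUsub : (⋃ t ∈ Finset.range m, A t) ⊆ K := by
      intro ω hω
      obtain ⟨t, ht, hmem⟩ := Set.mem_iUnion₂.mp hω
      rw [Finset.mem_range] at ht
      rw [hAdef] at hmem
      rw [hKdef]
      refine Set.mem_setOf_eq ▸ (longestRun_ge_iff _ n (k n) hknpos).mpr ⟨t * k n, ?_, ?_⟩
      · have e1 : (t + 1) * k n ≤ m * k n := Nat.mul_le_mul_right _ (by omega)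
        have e2 : m * k n ≤ n := by rw [hm]; exact Nat.div_mul_le_self n (k n)
        have e3 : (t + 1) * k n = t * k n + k n := by ring
        omega
      · intro j hj
        exact hmem _ (Finset.mem_image.mpr ⟨j, Finset.mem_range.mpr hj, rfl⟩)
    have hbon := bonferroni μ A hAmeas m
    have hEnn : (m : ℝ≥0∞) * q ^ k n ≤ μ K + (m : ℝ≥0∞) * ((m : ℝ≥0∞) * q ^ (2 * k n)) := by
      have hL : ∑ t ∈ Finset.range m, μ (A t) = (m : ℝ≥0∞) * q ^ k n := by
        simp only [hA]
        rw [Finset.sum_const, Finset.card_range, nsmul_eq_mul]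
      have hR : ∑ t ∈ Finset.range m, ∑ s ∈ Finset.range t, μ (A s ∩ A t)
          ≤ (m : ℝ≥0∞) * ((m : ℝ≥0∞) * q ^ (2 * k n)) := by
        calc ∑ t ∈ Finset.range m, ∑ s ∈ Finset.range t, μ (A s ∩ A t)
            = ∑ t ∈ Finset.range m, ∑ _s ∈ Finset.range t, q ^ (2 * k n) := by
              refine Finset.sum_congr rfl fun t _ => ?_
              exact Finset.sum_congr rfl fun s hs => hApair s t (Finset.mem_range.mp hs)
          _ = ∑ t ∈ Finset.range m, (t : ℝ≥0∞) * q ^ (2 * k n) := by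
              refine Finset.sum_congr rfl fun t _ => ?_
              rw [Finset.sum_const, Finset.card_range, nsmul_eq_mul]
          _ ≤ ∑ _t ∈ Finset.range m, (m : ℝ≥0∞) * q ^ (2 * k n) := by
              refine Finset.sum_le_sum fun t ht => ?_
              gcongr
              exact_mod_cast (Finset.mem_range.mp ht).le
          _ = (m : ℝ≥0∞) * ((m : ℝ≥0∞) * q ^ (2 * k n)) := by
              rw [Finset.sum_const, Finset.card_range, nsmul_eq_mul]
      calc (m : ℝ≥0∞) * q ^ k n = ∑ t ∈ Finset.range m, μ (A t) := hL.symm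
        _ ≤ μ (⋃ t ∈ Finset.range m, A t)
            + ∑ t ∈ Finset.range m, ∑ s ∈ Finset.range t, μ (A s ∩ A t) := hbon
        _ ≤ μ K + (m : ℝ≥0∞) * ((m : ℝ≥0∞) * q ^ (2 * k n)) :=
            add_le_add (measure_mono hUsub) hR
    -- pass to real numbers
    have hqne : q ≠ ⊤ := ENNReal.ofReal_ne_top
    have hPu : (μ K).toReal ≤ (n:ℝ) * p ^ k n := by
      have h1 := ENNReal.toReal_mono
        (ENNReal.mul_ne_top (ENNReal.natCast_ne_top n) (ENNReal.pow_ne_top hqne)) hupper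
      rwa [ENNReal.toReal_mul, ENNReal.toReal_pow, ENNReal.toReal_natCast, hqdef,
        ENNReal.toReal_ofReal hp0.le] at h1
    have hPl2 : (m:ℝ) * p ^ k n ≤ (μ K).toReal + (m:ℝ) * ((m:ℝ) * p ^ (2 * k n)) := by
      have hne : μ K + (m : ℝ≥0∞) * ((m : ℝ≥0∞) * q ^ (2 * k n)) ≠ ⊤ := by
        refine ENNReal.add_ne_top.mpr ⟨measure_ne_top μ K, ?_⟩
        exact ENNReal.mul_ne_top (ENNReal.natCast_ne_top m)
          (ENNReal.mul_ne_top (ENNReal.natCast_ne_top m) (ENNReal.pow_ne_top hqne))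
      have h1 := ENNReal.toReal_mono hne hEnn
      rwa [ENNReal.toReal_add (measure_ne_top μ K)
          (ENNReal.mul_ne_top (ENNReal.natCast_ne_top m)
            (ENNReal.mul_ne_top (ENNReal.natCast_ne_top m) (ENNReal.pow_ne_top hqne))),
        ENNReal.toReal_mul, ENNReal.toReal_mul, ENNReal.toReal_mul,
        ENNReal.toReal_pow, ENNReal.toReal_pow, ENNReal.toReal_natCast, hqdef,
        ENNReal.toReal_ofReal hp0.le] at h1
    have hppow : (0:ℝ) < p ^ k n := pow_pos hp0 _
    have hmlen : (m:ℝ) ≤ n := by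
      have : m ≤ n := by rw [hm]; exact Nat.div_le_self n (k n)
      exact_mod_cast this
    have hmR : (0:ℝ) < m := by exact_mod_cast hm1
    have ht1 : (m:ℝ) * p ^ k n ≤ 1/2 :=
      le_trans (mul_le_mul_of_nonneg_right hmlen hppow.le) hhalfn
    have hp2 : p ^ (2 * k n) = (p ^ k n)^2 := by rw [two_mul, pow_add]; ring
    have hmain : (m:ℝ) * p ^ k n / 2 ≤ (μ K).toReal := by
      have htnn : 0 ≤ (m:ℝ) * p ^ k n := le_of_lt (mul_pos hmR hppow)
      have hsq : (m:ℝ) * ((m:ℝ) * (p ^ k n)^2) = ((m:ℝ) * p ^ k n) * ((m:ℝ) * p ^ k n) := by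
        ring
      rw [hp2, hsq] at hPl2
      have h2' : ((m:ℝ) * p ^ k n) * ((m:ℝ) * p ^ k n) ≤ ((m:ℝ) * p ^ k n) * (1/2) :=
        mul_le_mul_of_nonneg_left ht1 htnn
      linarith
    -- m ≥ n / (2 k n)
    have hdm : n < (m + 1) * k n := by
      have h1 := Nat.div_add_mod n (k n)
      have h2 := Nat.mod_lt n hknpos
      have e3 : (m + 1) * k n = k n * (n / k n) + k n := by rw [hm]; ring
      omega
    have hm_ge : (n:ℝ) / (2 * k n) ≤ (m:ℝ) := by
      have hdmR : (n:ℝ) < ((m:ℝ) + 1) * k n := by exact_mod_cast hdm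
      have hmR1 : (1:ℝ) ≤ m := by exact_mod_cast hm1
      rw [div_le_iff₀ (by positivity)]
      nlinarith
    refine ⟨?_, hPu⟩
    have heq : (n:ℝ) * p ^ k n / (4 * k n) = ((n:ℝ) / (2 * k n)) * p ^ k n / 2 := by
      field_simp
      ring
    rw [heq]
    calc ((n:ℝ) / (2 * k n)) * p ^ k n / 2 ≤ (m:ℝ) * p ^ k n / 2 := by gcongr
      _ ≤ (μ K).toReal := hmain
  -- inverse identity
  have hIV : ∀ n : ℕ, 0 < Real.log n → (Real.log n / L₀)⁻¹ * Real.log n = L₀ := by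
    intro n h
    rw [inv_div]
    exact div_mul_cancel₀ L₀ h.ne'
  -- eventual upper bound
  have hTu : ∀ᶠ n : ℕ in atTop, (Real.log n / L₀)⁻¹ *
      Real.log ((μ {ω | 1 + x ≤
        (longestRun (fun i => X i ω) n : ℝ) / (Real.log n / L₀)}).toReal)
      ≤ -(x * L₀) := by
    filter_upwards [hloglarge, h2k, hhalf] with n h1 h2 h3
    obtain ⟨hPl, hPu⟩ := hbounds n h1 h2 h3
    set Pn := (μ {ω | 1 + x ≤
        (longestRun (fun i => X i ω) n : ℝ) / (Real.log n / L₀)}).toReal with hPn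
    clear_value Pn
    have hlogpos : 0 < Real.log n := by linarith
    have hn0 : n ≠ 0 := by rintro rfl; simp at hlogpos
    have hnposR : (0:ℝ) < n := by positivity
    have hknR : (0:ℝ) < k n := by exact_mod_cast hk1 n h1
    have hPpos : 0 < Pn := lt_of_lt_of_le (by positivity) hPl
    have hlogPu : Real.log Pn ≤ Real.log n + (k n : ℝ) * Real.log p := by
      calc Real.log Pn ≤ Real.log ((n:ℝ) * p ^ k n) := Real.log_le_log hPpos hPu
        _ = Real.log n + (k n:ℝ) * Real.log p := by
            rw [Real.log_mul hnposR.ne' (pow_pos hp0 _).ne', Real.log_pow]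
    have hkl : (k n:ℝ) * Real.log p ≤ -(c * Real.log n) := by
      have h4 : c * (Real.log n / L₀) ≤ (k n:ℝ) := by rw [hkdef]; exact Nat.le_ceil _
      have h5 := mul_le_mul_of_nonpos_right h4 hlogp.le
      calc (k n:ℝ) * Real.log p ≤ c * (Real.log n / L₀) * Real.log p := h5
        _ = c * (Real.log n / L₀ * Real.log p) := by ring
        _ = c * -Real.log n := by rw [hrlp n]
        _ = -(c * Real.log n) := by ring
    have hlogPx : Real.log Pn ≤ -(x * Real.log n) := by
      have e : Real.log n - c * Real.log n = -(x * Real.log n) := by rw [hcdef]; ring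
      linarith
    have hinv : 0 ≤ (Real.log n / L₀)⁻¹ := by positivity
    calc (Real.log n / L₀)⁻¹ * Real.log Pn
        ≤ (Real.log n / L₀)⁻¹ * (-(x * Real.log n)) :=
          mul_le_mul_of_nonneg_left hlogPx hinv
      _ = -(x * L₀) := by linear_combination (-x) * hIV n hlogpos
  -- eventual lower bound
  have hTl : ∀ᶠ n : ℕ in atTop,
      -(x * L₀) - (Real.log (k n) + C) * (Real.log n / L₀)⁻¹ ≤ (Real.log n / L₀)⁻¹ *
        Real.log ((μ {ω | 1 + x ≤
          (longestRun (fun i => X i ω) n : ℝ) / (Real.log n / L₀)}).toReal) := by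
    filter_upwards [hloglarge, h2k, hhalf] with n h1 h2 h3
    obtain ⟨hPl, hPu⟩ := hbounds n h1 h2 h3
    set Pn := (μ {ω | 1 + x ≤
        (longestRun (fun i => X i ω) n : ℝ) / (Real.log n / L₀)}).toReal with hPn
    clear_value Pn
    have hlogpos : 0 < Real.log n := by linarith
    have hn0 : n ≠ 0 := by rintro rfl; simp at hlogpos
    have hnposR : (0:ℝ) < n := by positivity
    have hknR : (0:ℝ) < k n := by exact_mod_cast hk1 n h1
    have hPpos : 0 < Pn := lt_of_lt_of_le (by positivity) hPl
    have hlogPl : Real.log n + (k n:ℝ) * Real.log p - (Real.log 4 + Real.log (k n))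
        ≤ Real.log Pn := by
      have harg : (0:ℝ) < (n:ℝ) * p ^ k n / (4 * k n) := by positivity
      calc Real.log n + (k n:ℝ) * Real.log p - (Real.log 4 + Real.log (k n))
          = Real.log ((n:ℝ) * p ^ k n / (4 * k n)) := by
            rw [Real.log_div (mul_pos hnposR (pow_pos hp0 _)).ne'
                (by positivity : (0:ℝ) < 4 * (k n : ℝ)).ne',
              Real.log_mul hnposR.ne' (pow_pos hp0 _).ne', Real.log_pow,
              Real.log_mul (by norm_num : (4:ℝ) ≠ 0) hknR.ne']
        _ ≤ Real.log Pn := Real.log_le_log harg hPl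
    have hku : -(c * Real.log n) + Real.log p ≤ (k n:ℝ) * Real.log p := by
      have h4 : (k n:ℝ) ≤ c * (Real.log n / L₀) + 1 := by
        rw [hkdef]; exact (Nat.ceil_lt_add_one (by positivity)).le
      have h5 := mul_le_mul_of_nonpos_right h4 hlogp.le
      have e : (c * (Real.log n / L₀) + 1) * Real.log p
          = -(c * Real.log n) + Real.log p := by
        rw [add_mul, one_mul, mul_assoc, hrlp n]
        ring
      rw [e] at h5
      exact h5
    have hlogPl2 : -(x * Real.log n) - (Real.log (k n) + C) ≤ Real.log Pn := by
      have hxc : x = c - 1 := by rw [hcdef]; ring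
      have hClin : C = Real.log 4 - Real.log p := hCdef
      nlinarith [hlogPl, hku]
    have hinv : 0 ≤ (Real.log n / L₀)⁻¹ := by positivity
    calc -(x * L₀) - (Real.log (k n) + C) * (Real.log n / L₀)⁻¹
        = (Real.log n / L₀)⁻¹ * (-(x * Real.log n) - (Real.log (k n) + C)) := by
          linear_combination x * hIV n hlogpos
      _ ≤ (Real.log n / L₀)⁻¹ * Real.log Pn :=
          mul_le_mul_of_nonneg_left hlogPl2 hinv
  -- the lower comparison function tends to the limit
  have hexpr : Tendsto (fun n : ℕ => (Real.log (k n) + C) * (Real.log n / L₀)⁻¹)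
      atTop (nhds 0) := by
    have hφ : Tendsto (fun t : ℝ => (Real.log D + Real.log t + C) * (L₀ / t))
        atTop (nhds 0) := by
      have h1 : Tendsto (fun t : ℝ => Real.log t / t) atTop (nhds 0) :=
        Real.isLittleO_log_id_atTop.tendsto_div_nhds_zero
      have h2 : Tendsto (fun t : ℝ => (Real.log D + C) / t) atTop (nhds 0) :=
        tendsto_const_nhds.div_atTop tendsto_id
      have h3 := (h2.add h1).const_mul L₀
      rw [add_zero, mul_zero] at h3
      exact h3.congr fun t => by ring
    have hcomp := hφ.comp (Real.tendsto_log_atTop.comp tendsto_natCast_atTop_atTop)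
    apply squeeze_zero' ?_ ?_ hcomp
    · filter_upwards [hloglarge] with n hn
      have hk1n : (1:ℝ) ≤ k n := by exact_mod_cast hk1 n hn
      have h0 : 0 ≤ Real.log (k n) := Real.log_nonneg hk1n
      have hinv : 0 ≤ (Real.log n / L₀)⁻¹ := by positivity
      exact mul_nonneg (by linarith) hinv
    · filter_upwards [hloglarge] with n hn
      have hlogpos : 0 < Real.log n := by linarith
      have hk1n : (1:ℝ) ≤ k n := by exact_mod_cast hk1 n hn
      have hlogk : Real.log (k n) ≤ Real.log D + Real.log (Real.log n) := by
        calc Real.log (k n) ≤ Real.log (D * Real.log n) :=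
            Real.log_le_log (by linarith) (hkD n hn)
          _ = Real.log D + Real.log (Real.log n) := Real.log_mul hD0.ne' hlogpos.ne'
      have hIVe : (Real.log (n:ℕ) / L₀)⁻¹ = L₀ / Real.log (n:ℕ) := inv_div _ _
      rw [hIVe]
      have h0 : 0 ≤ L₀ / Real.log n := by positivity
      show (Real.log (k n) + C) * (L₀ / Real.log n)
          ≤ (Real.log D + Real.log (Real.log n) + C) * (L₀ / Real.log n)
      exact mul_le_mul_of_nonneg_right (by linarith) h0
  have hg : Tendsto (fun n : ℕ => -(x * L₀) - (Real.log (k n) + C) * (Real.log n / L₀)⁻¹)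
      atTop (nhds (-(x * L₀))) := by
    simpa using (tendsto_const_nhds : Tendsto (fun _ : ℕ => -(x * L₀)) atTop _).sub hexpr
  exact tendsto_of_tendsto_of_tendsto_of_le_of_le' hg tendsto_const_nhds hTl hTu
end
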